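/- Let L, μ, c, α, ε > 0, σ, C ≥ 0, η := μL/(μ+L), let N be a positive integer, and set q := 5η²/(L(η + 2L)). Assume αε ≤ 2/(μ+L), ε ≤ min{1/(2c), α}, 12L²α² ≤ qc², and let R > 0 satisfy R ≥ 4Nσ²/η and R ≥ (4/(qc))[(3L²α²/c)C² + 4Nεσ²]. Let (A_k)_{k≥0} and (B_k)_{k≥0} be nonnegative real sequences with A_0 ≤ R and B_0 ≤ qR satisfying, for all k ≥ 0: A_{k+1} ≤ (1 − 3ηαε/2)A_k + Lαε(1/4 + L/(2η))B_k + Nε²σ², and B_{k+1} ≤ (1 − cε/2)B_k + (3L²α²ε/c)(A_k + C²) + 4Nε²σ². Then A_k ≤ R and B_k ≤ qR for all k ≥ 0. -/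

import Mathlib

set_option maxHeartbeats 1000000 in
/-- Sequence-level (induction) form of Theorem 1 (lem1-8) of the paper,
quantization of type 1: uniform boundedness of the QDGD iterates. -/
theorem stmt13 (L μ c α ε : ℝ) (σ C : ℝ) (N : ℕ) (hNpos : 0 < N)
    (hL : 0 < L) (hμ : 0 < μ) (hc : 0 < c) (hα : 0 < α) (hε : 0 < ε)
    (hσ : 0 ≤ σ) (hC : 0 ≤ C)
    (η q : ℝ) (hη : η = μ * L / (μ + L)) (hq : q = 5 * η ^ 2 / (L * (η + 2 * L)))
    (hαε : α * ε ≤ 2 / (μ + L)) (hεc : ε ≤ 1 / (2 * c)) (hεα : ε ≤ α)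
    (hα2 : 12 * L ^ 2 * α ^ 2 ≤ q * c ^ 2)
    (R : ℝ) (hR : 0 < R) (hR1 : 4 * N * σ ^ 2 / η ≤ R)
    (hR2 : 4 / (q * c) * (3 * L ^ 2 * α ^ 2 / c * C ^ 2 + 4 * N * ε * σ ^ 2) ≤ R)
    (A B : ℕ → ℝ) (hA0 : ∀ k, 0 ≤ A k) (hB0 : ∀ k, 0 ≤ B k)
    (hA0R : A 0 ≤ R) (hB0R : B 0 ≤ q * R)
    (hrecA : ∀ k, A (k + 1) ≤ (1 - 3 * η * α * ε / 2) * A k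
      + L * α * ε * (1 / 4 + L / (2 * η)) * B k + N * ε ^ 2 * σ ^ 2)
    (hrecB : ∀ k, B (k + 1) ≤ (1 - c * ε / 2) * B k
      + 3 * L ^ 2 * α ^ 2 * ε / c * (A k + C ^ 2) + 4 * N * ε ^ 2 * σ ^ 2) :
    ∀ k, A k ≤ R ∧ B k ≤ q * R := by
  have hμL : 0 < μ + L := by linarith
  have hηpos : 0 < η := by rw [hη]; positivity
  have hqpos : 0 < q := by rw [hq]; positivity
  have hNpos' : (0:ℝ) < N := by exact_mod_cast hNpos
  -- key identity: L * (1/4 + L/(2η)) * q = 5η/4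
  have hkey : L * (1 / 4 + L / (2 * η)) * q = 5 * η / 4 := by
    rw [hq]; field_simp; ring
  -- ηαε ≤ 1/2
  have hηαε : η * (α * ε) ≤ 1 / 2 := by
    have h1 : η * (α * ε) ≤ η * (2 / (μ + L)) :=
      mul_le_mul_of_nonneg_left hαε (le_of_lt hηpos)
    have h2 : η * (2 / (μ + L)) = 2 * μ * L / (μ + L) ^ 2 := by
      rw [hη]; field_simp
    have h3 : 4 * μ * L ≤ (μ + L) ^ 2 := by nlinarith [sq_nonneg (μ - L)]
    have h4 : 2 * μ * L / (μ + L) ^ 2 ≤ 1 / 2 := by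
      rw [div_le_div_iff₀ (by positivity) (by norm_num : (0:ℝ) < 2)]; nlinarith
    linarith
  -- Nσ² ≤ ηR/4
  have hNσ : (N : ℝ) * σ ^ 2 ≤ η * R / 4 := by
    rw [div_le_iff₀ hηpos] at hR1; linarith
  -- (3L²α²/c)C² + 4Nεσ² ≤ qcR/4
  have hB2 : 3 * L ^ 2 * α ^ 2 / c * C ^ 2 + 4 * N * ε * σ ^ 2 ≤ q * c * R / 4 := by
    have hqc : 0 < q * c := by positivity
    rw [div_mul_eq_mul_div, div_le_iff₀ hqc] at hR2
    linarith
  -- 3L²α²/c ≤ qc/4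
  have hqc4 : 3 * L ^ 2 * α ^ 2 / c ≤ q * c / 4 := by
    rw [div_le_div_iff₀ hc (by norm_num : (0:ℝ) < 4)]
    have e : q * c ^ 2 = q * c * c := by ring
    linarith
  have hcε : c * ε ≤ 1 / 2 := by
    have := mul_le_mul_of_nonneg_left hεc (le_of_lt hc)
    rw [mul_one_div] at this
    calc c * ε ≤ c / (2 * c) := this
      _ = 1 / 2 := by field_simp
  intro k
  induction k with
  | zero => exact ⟨hA0R, hB0R⟩
  | succ k ih =>
    obtain ⟨hAk, hBk⟩ := ih
    have hcoefA : 0 ≤ 1 - 3 * η * α * ε / 2 := by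
      have e : 3 * η * α * ε / 2 = 3 / 2 * (η * (α * ε)) := by ring
      linarith
    have hcoefB : 0 ≤ L * α * ε * (1 / 4 + L / (2 * η)) := by positivity
    have hcoefB' : 0 ≤ 1 - c * ε / 2 := by linarith
    constructor
    · have h1 := hrecA k
      have h4 : (1 - 3 * η * α * ε / 2) * A k ≤ (1 - 3 * η * α * ε / 2) * R :=
        mul_le_mul_of_nonneg_left hAk hcoefA
      have h2 : L * α * ε * (1 / 4 + L / (2 * η)) * B k
          ≤ L * α * ε * (1 / 4 + L / (2 * η)) * (q * R) :=
        mul_le_mul_of_nonneg_left hBk hcoefB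
      have h3 : L * α * ε * (1 / 4 + L / (2 * η)) * (q * R)
          = 5 * η * α * ε * R / 4 := by
        have e : L * α * ε * (1 / 4 + L / (2 * η)) * (q * R)
            = (L * (1 / 4 + L / (2 * η)) * q) * (α * ε * R) := by ring
        rw [e, hkey]; ring
      have hεε : ε * ε ≤ α * ε := mul_le_mul_of_nonneg_right hεα hε.le
      have h5 : (N : ℝ) * ε ^ 2 * σ ^ 2 ≤ η * α * ε * R / 4 := by
        have s3 : ε * ε * ((N : ℝ) * σ ^ 2) ≤ α * ε * (η * R / 4) :=
          mul_le_mul hεε hNσ (by positivity) (by positivity)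
        calc (N : ℝ) * ε ^ 2 * σ ^ 2 = ε * ε * ((N : ℝ) * σ ^ 2) := by ring
          _ ≤ α * ε * (η * R / 4) := s3
          _ = η * α * ε * R / 4 := by ring
      have efin : (1 - 3 * η * α * ε / 2) * R + 5 * η * α * ε * R / 4
          + η * α * ε * R / 4 = R := by ring
      linarith
    · have h1 := hrecB k
      have h2 : (1 - c * ε / 2) * B k ≤ (1 - c * ε / 2) * (q * R) :=
        mul_le_mul_of_nonneg_left hBk hcoefB'
      have hco : 0 ≤ 3 * L ^ 2 * α ^ 2 * ε / c := by positivity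
      have h3 : 3 * L ^ 2 * α ^ 2 * ε / c * (A k + C ^ 2)
          ≤ 3 * L ^ 2 * α ^ 2 * ε / c * (R + C ^ 2) :=
        mul_le_mul_of_nonneg_left (by linarith) hco
      have t1 : 3 * L ^ 2 * α ^ 2 * ε / c * R ≤ ε * (q * c / 4 * R) := by
        have : 3 * L ^ 2 * α ^ 2 / c * R ≤ q * c / 4 * R :=
          mul_le_mul_of_nonneg_right hqc4 hR.le
        calc 3 * L ^ 2 * α ^ 2 * ε / c * R = ε * (3 * L ^ 2 * α ^ 2 / c * R) := by
              ring
          _ ≤ ε * (q * c / 4 * R) := mul_le_mul_of_nonneg_left this hε.le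
      have t2 : 3 * L ^ 2 * α ^ 2 * ε / c * C ^ 2 + 4 * N * ε ^ 2 * σ ^ 2
          ≤ ε * (q * c * R / 4) := by
        have := mul_le_mul_of_nonneg_left hB2 hε.le
        calc 3 * L ^ 2 * α ^ 2 * ε / c * C ^ 2 + 4 * N * ε ^ 2 * σ ^ 2
            = ε * (3 * L ^ 2 * α ^ 2 / c * C ^ 2 + 4 * N * ε * σ ^ 2) := by ring
          _ ≤ ε * (q * c * R / 4) := this
      have efin : (1 - c * ε / 2) * (q * R) + ε * (q * c / 4 * R)
          + ε * (q * c * R / 4) = q * R := by ring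
      have h3' : 3 * L ^ 2 * α ^ 2 * ε / c * (R + C ^ 2)
          = 3 * L ^ 2 * α ^ 2 * ε / c * R + 3 * L ^ 2 * α ^ 2 * ε / c * C ^ 2 := by
        ring
      linarith
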